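/- Let G be a triconnected graph, let C be a simple cycle of G whose vertex set separates G \ C into two parts A and B (no edge of G joins A to B), and let H be any connected component of A. Then the graph G/H obtained from G by contracting H into a single vertex is triconnected. -/

import Mathlib

/-! Preamble: finite multigraphs, connectivity, closed walks, contractions,
planar embeddings, levels, double layers, slices, branch decompositions. -/

structure Multigraph : Type 1 where
  V : Type
  E : Type
  fintypeV : Fintype V
  fintypeE : Fintype E
  decEqV : DecidableEq V
  decEqE : DecidableEq E
  ends : E → Sym2 V

attribute [instance] Multigraph.fintypeV Multigraph.fintypeE
attribute [instance] Multigraph.decEqV Multigraph.decEqE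

namespace Multigraph

variable (G : Multigraph)

/-- Reachability inside the vertex set `A`, using only edges in `S`. -/
def Reach (A : Set G.V) (S : Set G.E) : G.V → G.V → Prop :=
  Relation.ReflTransGen (fun a b => a ∈ A ∧ b ∈ A ∧ ∃ e ∈ S, G.ends e = s(a, b))

/-- The subgraph with vertex set `A` and the edges of `S` (restricted to `A`)
is connected. -/
def ConnectedOn (A : Set G.V) (S : Set G.E) : Prop :=
  ∀ u ∈ A, ∀ v ∈ A, G.Reach A S u v

def Connected : Prop := G.ConnectedOn Set.univ Set.univ

/-- `G` remains connected after deleting any `k - 1` edges. -/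
def EdgeConn (k : ℕ) : Prop :=
  ∀ F : Finset G.E, F.card < k → G.ConnectedOn Set.univ (↑F)ᶜ

/-- `G` remains connected after deleting any `k - 1` vertices. -/
def VertexConn (k : ℕ) : Prop :=
  ∀ W : Finset G.V, W.card < k → G.ConnectedOn (↑W)ᶜ Set.univ

/-- The spanning subgraph of `G` with edge set `S` is `k`-edge connected. -/
def EdgeConnSub (S : Set G.E) (k : ℕ) : Prop :=
  ∀ F : Finset G.E, F.card < k → G.ConnectedOn Set.univ (S \ ↑F)

/-- The spanning subgraph of `G` with edge set `S` is `k`-vertex connected. -/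
def VertexConnSub (S : Set G.E) (k : ℕ) : Prop :=
  ∀ W : Finset G.V, W.card < k → G.ConnectedOn (↑W)ᶜ S

def Loopless : Prop := ∀ e : G.E, ¬ (G.ends e).IsDiag

def Simple : Prop := G.Loopless ∧ ∀ e e' : G.E, G.ends e = G.ends e' → e = e'

/-- At most `m` parallel edges between any pair of vertices. -/
def ParallelBound (m : ℕ) : Prop := ∀ p : Sym2 G.V, {e : G.E | G.ends e = p}.ncard ≤ m

def AdjV (u v : G.V) : Prop := ∃ e : G.E, G.ends e = s(u, v)

/-- `H` is a connected component of the subgraph induced by `A`. -/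
def IsCompOf (A H : Set G.V) : Prop :=
  ∃ u ∈ A, H = {v | v ∈ A ∧ G.Reach A Set.univ u v}

end Multigraph

/-! ### Closed walks, circuits and simple cycles -/

structure ClosedWalk (G : Multigraph) where
  n : ℕ
  npos : 0 < n
  vert : ℕ → G.V
  edge : ℕ → G.E
  ends_eq : ∀ i < n, G.ends (edge i) = s(vert i, vert (i + 1))
  closed : vert n = vert 0

namespace ClosedWalk

variable {G : Multigraph} (C : ClosedWalk G)

def edgeSet : Set G.E := {e | ∃ i < C.n, C.edge i = e}

def vertexSet : Set G.V := {v | ∃ i < C.n, C.vert i = v}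

/-- A circuit: a closed walk with no repeated edge. -/
def IsCircuit : Prop := ∀ i < C.n, ∀ j < C.n, C.edge i = C.edge j → i = j

/-- A simple cycle: a circuit with no repeated vertex. -/
def IsSimpleCycle : Prop :=
  C.IsCircuit ∧ ∀ i < C.n, ∀ j < C.n, C.vert i = C.vert j → i = j

end ClosedWalk

namespace Multigraph

variable (G : Multigraph)

/-- `C` is a maximal circuit among the circuits with all edges in `S`. -/
def IsMaxCircuitIn (S : Set G.E) (C : ClosedWalk G) : Prop :=
  C.IsCircuit ∧ C.edgeSet ⊆ S ∧
    ∀ C' : ClosedWalk G, C'.IsCircuit → C'.edgeSet ⊆ S →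
      C.edgeSet ⊆ C'.edgeSet → C'.edgeSet ⊆ C.edgeSet

/-- `C` is a simple cycle all of whose edges lie in `S`. -/
def IsSimpleCycleIn (S : Set G.E) (C : ClosedWalk G) : Prop :=
  C.IsSimpleCycle ∧ C.edgeSet ⊆ S

/-! ### Contractions -/

/-- Identify all vertices in `S` to a single vertex. -/
def contractSetoid (S : Set G.V) : Setoid G.V where
  r a b := a = b ∨ (a ∈ S ∧ b ∈ S)
  iseqv := by
    refine ⟨fun x => Or.inl rfl, ?_, ?_⟩
    · rintro x y (rfl | ⟨hx, hy⟩)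
      · exact Or.inl rfl
      · exact Or.inr ⟨hy, hx⟩
    · rintro x y z (rfl | ⟨hx, hy⟩) h
      · exact h
      · rcases h with rfl | ⟨hy', hz⟩
        · exact Or.inr ⟨hx, hy⟩
        · exact Or.inr ⟨hx, hz⟩

/-- The graph obtained from `G` by contracting the vertex set `S` to one
vertex, deleting the resulting self-loops. -/
noncomputable def contractSet (S : Set G.V) : Multigraph where
  V := Quotient (G.contractSetoid S)
  E := {e : G.E // ¬ (Sym2.map (Quotient.mk (G.contractSetoid S)) (G.ends e)).IsDiag}
  fintypeV := Fintype.ofFinite _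
  fintypeE := Fintype.ofFinite _
  decEqV := Classical.decEq _
  decEqE := Classical.decEq _
  ends := fun e => Sym2.map (Quotient.mk (G.contractSetoid S)) (G.ends e.1)

end Multigraph

namespace Multigraph

variable (G : Multigraph)

/-- Identify the vertices of each connected component of `G ∖ U`. -/
def outsideSetoid (U : Set G.V) : Setoid G.V where
  r a b := a = b ∨ (a ∉ U ∧ b ∉ U ∧ G.Reach Uᶜ Set.univ a b)
  iseqv := by
    refine ⟨fun x => Or.inl rfl, ?_, ?_⟩
    · rintro x y (rfl | ⟨hx, hy, hr⟩)
      · exact Or.inl rfl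
      · refine Or.inr ⟨hy, hx, ?_⟩
        refine (@Relation.ReflTransGen.stdSymm _ _ ⟨?_⟩).symm _ _ hr
        rintro a b ⟨ha, hb, e, he, hse⟩
        exact ⟨hb, ha, e, he, by rw [hse, Sym2.eq_swap]⟩
    · rintro x y z (rfl | ⟨hx, hy, hxy⟩) h
      · exact h
      · rcases h with rfl | ⟨hy', hz, hyz⟩
        · exact Or.inr ⟨hx, hy, hxy⟩
        · exact Or.inr ⟨hx, hz, hxy.trans hyz⟩

/-- The graph obtained from `G` by contracting each connected component of
`G ∖ U` to a single node, deleting the resulting self-loops. -/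
noncomputable def contractOutside (U : Set G.V) : Multigraph where
  V := Quotient (G.outsideSetoid U)
  E := {e : G.E // ¬ (Sym2.map (Quotient.mk (G.outsideSetoid U)) (G.ends e)).IsDiag}
  fintypeV := Fintype.ofFinite _
  fintypeE := Fintype.ofFinite _
  decEqV := Classical.decEq _
  decEqE := Classical.decEq _
  ends := fun e => Sym2.map (Quotient.mk (G.outsideSetoid U)) (G.ends e.1)

/-- An (arbitrary, fixed) numbering of the edges of `G`. -/
noncomputable def edgeIdx (e : G.E) : ℕ := ((Fintype.equivFin G.E) e : ℕ)

/-- Delete parallel edges so that at most `m` parallel edges remain between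
any pair of vertices (keeping, in each parallel class, the `m` edges of
smallest index). -/
noncomputable def trim (m : ℕ) : Multigraph where
  V := G.V
  E := {e : G.E // {e' : G.E | G.ends e' = G.ends e ∧ G.edgeIdx e' < G.edgeIdx e}.ncard < m}
  fintypeV := G.fintypeV
  fintypeE := Fintype.ofFinite _
  decEqV := G.decEqV
  decEqE := Classical.decEq _
  ends := fun e => G.ends e.1

end Multigraph

/-! ### Planar embeddings, levels and slices -/

/-- A planar embedding of the multigraph `G`: vertices are points of the
plane and edges are arcs joining thir endpoints, arcs being internally
disjoint from each other and from the vertices. -/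
structure Multigraph.PlanarEmb (G : Multigraph) where
  vpos : G.V → ℝ × ℝ
  arc : G.E → ℝ → ℝ × ℝ
  vpos_inj : Function.Injective vpos
  arc_cont : ∀ e, ContinuousOn (arc e) (Set.Icc 0 1)
  arc_ends : ∀ e, Sym2.map vpos (G.ends e) = s(arc e 0, arc e 1)
  arc_inj : ∀ e, ∀ t ∈ Set.Ioo (0:ℝ) 1, ∀ u ∈ Set.Icc (0:ℝ) 1, arc e t = arc e u → t = u
  arc_avoid_vert : ∀ e, ∀ t ∈ Set.Ioo (0:ℝ) 1, arc e t ∉ Set.range vpos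
  arcs_disj : ∀ e e', e ≠ e' → ∀ t ∈ Set.Ioo (0:ℝ) 1, ∀ u ∈ Set.Icc (0:ℝ) 1,
    arc e t ≠ arc e' u

/-- `G` is planar: it admits a planar embedding. -/
def Multigraph.Planar (G : Multigraph) : Prop := Nonempty G.PlanarEmb

/-- A Jordan curve `J` (together with the closed disk it bounds) encloses the
point `p`. -/
def JordanEncloses (J : Set (ℝ × ℝ)) (p : ℝ × ℝ) : Prop :=
  p ∈ J ∨ (p ∉ J ∧ Bornology.IsBounded (connectedComponentIn Jᶜ p))

namespace Multigraph.PlanarEmb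

variable {G : Multigraph} (emb : G.PlanarEmb)

/-- The image in the plane of the subgraph of `G` induced by `A`. -/
def image (A : Set G.V) : Set (ℝ × ℝ) :=
  emb.vpos '' A ∪ ⋃ e ∈ {e : G.E | ∀ v ∈ G.ends e, v ∈ A}, emb.arc e '' Set.Icc 0 1

/-- `p` is a point of the outer (infinite) face of the subgraph of `G`
induced by `A`. -/
def OuterPt (A : Set G.V) (p : ℝ × ℝ) : Prop :=
  p ∉ emb.image A ∧ ¬ Bornology.IsBounded (connectedComponentIn (emb.image A)ᶜ p)

/-- The vertex `v ∈ A` lies on the outer face of the subgraph of `G` induced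
by `A`. -/
def OnOuter (A : Set G.V) (v : G.V) : Prop :=
  v ∈ A ∧ emb.vpos v ∈ closure {p | emb.OuterPt A p}

/-- `V_i`: the set of vertices of level `i`; a vertex has level `i` if it lies
on the outer face after all vertices of smaller levels have been deleted. -/
def levelSet : ℕ → Set G.V
  | i => {v | emb.OnOuter {w | ∀ j, j < i → w ∉ levelSet j} v}
  termination_by i => i
  decreasing_by assumption

/-- The edges of `∂(G[A])`: edges of the subgraph induced by `A` lying on its
outer boundary. -/
def boundarySet (A : Set G.V) : Set G.E :=
  {e | (∀ v ∈ G.ends e, v ∈ A) ∧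
    emb.arc e '' Set.Icc 0 1 ⊆ closure {p | emb.OuterPt A p}}

/-- The curve in the plane traced by a closed walk. -/
def curveOf (C : ClosedWalk G) : Set (ℝ × ℝ) :=
  {p | ∃ i < C.n, p ∈ emb.arc (C.edge i) '' Set.Icc 0 1}

/-- A closed walk encloses the point `p` if some simple cycle contained in it
does. -/
def EnclosesPt (C : ClosedWalk G) (p : ℝ × ℝ) : Prop :=
  ∃ C' : ClosedWalk G, C'.IsSimpleCycle ∧ C'.edgeSet ⊆ C.edgeSet ∧
    JordanEncloses (emb.curveOf C') p

def EnclosesV (C : ClosedWalk G) (v : G.V) : Prop := emb.EnclosesPt C (emb.vpos v)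

end Multigraph.PlanarEmb

/-- `f(i) = max (i·k − k + t) 0`. -/
def fIdx (k t i : ℕ) : ℕ := i * k + t - k

namespace Multigraph.PlanarEmb

variable {G : Multigraph} (emb : G.PlanarEmb)

/-- The set of edges with one endpoint of level `a` and the other of level `b`. -/
def ebtw (a b : ℕ) : Set G.E :=
  {e | ∃ u v, G.ends e = s(u, v) ∧ u ∈ emb.levelSet a ∧ v ∈ emb.levelSet b}

/-- The `i`-th double layer `D_i = E_{i−1,i} ∪ E_i ∪ E_{i,i+1} ∪ E_{i+1}`. -/
def dlayer (i : ℕ) : Set G.E :=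
  emb.ebtw (i - 1) i ∪ emb.ebtw i i ∪ emb.ebtw i (i + 1) ∪ emb.ebtw (i + 1) (i + 1)

/-- `R_j = ⋃_{i ≡ j mod k} D_i`. -/
def rset (k j : ℕ) : Set G.E := ⋃ i ∈ {i : ℕ | i % k = j}, emb.dlayer i

/-- The edge set of `H_i`: the subgraph induced by the vertices of levels
`f(i)−1` through `f(i+1)+1`, minus the edges of `E_{f(i)−1}`. -/
def hiEdges (k t i : ℕ) : Set G.E :=
  {e | ∀ v ∈ G.ends e, ∃ j : ℕ, (fIdx k t i : ℤ) - 1 ≤ (j : ℤ) ∧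
      (j : ℤ) ≤ (fIdx k t (i + 1) : ℤ) + 1 ∧ v ∈ emb.levelSet j} \
  {e | ∀ v ∈ G.ends e, ∃ j : ℕ, (j : ℤ) = (fIdx k t i : ℤ) - 1 ∧ v ∈ emb.levelSet j}

/-- The vertices of `H_i` outside `V_{f(i)−1} ∪ V_{f(i+1)+1}` enclosed by the
circuit `Ca`. -/
def sliceU (k t i : ℕ) (Ca : ClosedWalk G) : Set G.V :=
  {v | (∃ j, fIdx k t i ≤ j ∧ j ≤ fIdx k t (i + 1) ∧ v ∈ emb.levelSet j) ∧
    emb.EnclosesV Ca v}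

/-- The 3EC slice `H_i^a`: contract every connected component of `G ∖ U` and
keep at most 3 parallel edges between any pair of vertices. -/
noncomputable def slice3EC (k t i : ℕ) (Ca : ClosedWalk G) : Multigraph :=
  (G.contractOutside (emb.sliceU k t i Ca)).trim 3

/-- The 3VC slice `H_i^a`: contract every connected component of `G ∖ U` and
delete all parallel edges. -/
noncomputable def slice3VC (k t i : ℕ) (Ca : ClosedWalk G) : Multigraph :=
  (G.contractOutside (emb.sliceU k t i Ca)).trim 1

/-- The edge of `G` underlying an edge of a 3EC slice. -/
noncomputable def sliceEdge3EC (k t i : ℕ) (Ca : ClosedWalk G) :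
    (emb.slice3EC k t i Ca).E → G.E := fun e => e.1.1

/-- The edge of `G` underlying an edge of a 3VC slice. -/
noncomputable def sliceEdge3VC (k t i : ℕ) (Ca : ClosedWalk G) :
    (emb.slice3VC k t i Ca).E → G.E := fun e => e.1.1

end Multigraph.PlanarEmb

/-! ### Branch decompositions and branchwidth -/

inductive BTree (α : Type) : Type
  | leaf : α → BTree α
  | node : BTree α → BTree α → BTree α

namespace BTree

variable {α : Type}

def leaves : BTree α → List α
  | .leaf a => [a]
  | .node l r => l.leaves ++ r.leaves

def subtrees : BTree α → List (BTree α)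
  | .leaf a => [.leaf a]
  | .node l r => .node l r :: (l.subtrees ++ r.subtrees)

end BTree

/-- The size of the separator associated with the edge bipartition
`(E₁, E(G) ∖ E₁)`: the number of vertices incident to edges of both parts. -/
noncomputable def Multigraph.sepSize (G : Multigraph) (E₁ : Set G.E) : ℕ :=
  {v : G.V | (∃ e ∈ E₁, v ∈ G.ends e) ∧ ∃ e ∉ E₁, v ∈ G.ends e}.ncard

/-- `G` has branchwidth at most `w`: some branch decomposition (a binary tree
whose leaves are in bijection with `E(G)`) has all its separators of size at
most `w`. -/
noncomputable def Multigraph.BranchWidthLE (G : Multigraph) (w : ℕ) : Prop :=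
  IsEmpty G.E ∨ ∃ T : BTree G.E, T.leaves.Nodup ∧ (∀ e : G.E, e ∈ T.leaves) ∧
    ∀ S ∈ T.subtrees, G.sepSize {e | e ∈ S.leaves} ≤ w


section AuxProofs

namespace Multigraph

lemma reach_symm (G : Multigraph) (A : Set G.V) (S : Set G.E) {a b : G.V}
    (h : G.Reach A S a b) : G.Reach A S b a := by
  refine (@Relation.ReflTransGen.stdSymm _ _ ⟨?_⟩).symm _ _ h
  rintro x y ⟨hx, hy, e, he, hse⟩
  exact ⟨hy, hx, e, he, by rw [hse, Sym2.eq_swap]⟩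

lemma reach_contract (G : Multigraph) (H : Set G.V) (T : Set G.V)
    (T' : Set (G.contractSet H).V)
    (hmap : ∀ z ∈ T, Quotient.mk (G.contractSetoid H) z ∈ T')
    {x y : G.V} (h : G.Reach T Set.univ x y) :
    (G.contractSet H).Reach T' Set.univ
      (Quotient.mk (G.contractSetoid H) x) (Quotient.mk (G.contractSetoid H) y) := by
  induction h with
  | refl => exact Relation.ReflTransGen.refl
  | @tail b c hxb hbc ih =>
    obtain ⟨hb, hc, e, -, he⟩ := hbc
    by_cases hq : Quotient.mk (G.contractSetoid H) b = Quotient.mk (G.contractSetoid H) c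
    · exact hq ▸ ih
    · have hnd : ¬ (Sym2.map (Quotient.mk (G.contractSetoid H)) (G.ends e)).IsDiag := by
        rw [he, Sym2.map_pair_eq, Sym2.mk_isDiag_iff]
        exact hq
      refine ih.tail ⟨hmap _ hb, hmap _ hc, ⟨e, hnd⟩, trivial, ?_⟩
      show Sym2.map (Quotient.mk (G.contractSetoid H)) (G.ends e) = _
      rw [he, Sym2.map_pair_eq]
      rfl

lemma cycle_reach (G : Multigraph) (C : ClosedWalk G) (hC : C.IsSimpleCycle)
    (T : Set G.V) (w : G.V)
    (hT : ∀ z ∈ C.vertexSet, z ≠ w → z ∈ T) :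
    ∀ x ∈ C.vertexSet, ∀ y ∈ C.vertexSet, x ≠ w → y ≠ w →
      G.Reach T Set.univ x y := by
  have npos := C.npos
  set n := C.n with hn
  have hmem : ∀ m : ℕ, C.vert (m % n) ∈ C.vertexSet :=
    fun m => ⟨m % n, Nat.mod_lt _ npos, rfl⟩
  have hedge : ∀ m : ℕ,
      G.ends (C.edge (m % n)) = s(C.vert (m % n), C.vert ((m + 1) % n)) := by
    intro m
    have h1 := C.ends_eq (m % n) (Nat.mod_lt _ npos)
    have h2 : C.vert (m % n + 1) = C.vert ((m + 1) % n) := by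
      have hlt' : m % n < n := Nat.mod_lt m npos
      by_cases heq : m % n + 1 = n
      · have h0 : (m + 1) % n = 0 := by rw [← Nat.mod_add_mod, heq, Nat.mod_self]
        rw [h0, ← C.closed, heq]
      · have hlt2 : m % n + 1 < n := by omega
        rw [← Nat.mod_add_mod, Nat.mod_eq_of_lt hlt2]
    rw [h1, h2]
  have forward : ∀ (d i : ℕ), C.vert (i % n) ≠ w →
      (∀ m, 0 < m → m < d → C.vert ((i + m) % n) ≠ w) →
      C.vert ((i + d) % n) ≠ w →
      G.Reach T Set.univ (C.vert (i % n)) (C.vert ((i + d) % n)) := by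
    intro d
    induction d with
    | zero => intro i _ _ _; exact Relation.ReflTransGen.refl
    | succ d ih =>
      intro i h1 h2 h3
      rw [← Nat.add_assoc] at h3 ⊢
      have hd : C.vert ((i + d) % n) ≠ w := by
        rcases Nat.eq_zero_or_pos d with rfl | hdpos
        · simpa using h1
        · exact h2 d hdpos (Nat.lt_succ_self d)
      have hr := ih i h1 (fun m hm hm' => h2 m hm (hm'.trans (Nat.lt_succ_self d))) hd
      exact hr.tail ⟨hT _ (hmem _) hd, hT _ (hmem _) h3, C.edge ((i + d) % n),
        trivial, hedge (i + d)⟩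
  rintro x ⟨i0, hi0, rfl⟩ y ⟨j0, hj0, rfl⟩ hxw hyw
  by_cases hxy : C.vert i0 = C.vert j0
  · rw [hxy]
    exact Relation.ReflTransGen.refl
  have hi0m : i0 % n = i0 := Nat.mod_eq_of_lt hi0
  have hj0m : j0 % n = j0 := Nat.mod_eq_of_lt hj0
  set d1 := (n + j0 - i0) % n with hd1
  have hkey : (i0 + d1) % n = j0 := by
    rw [hd1, Nat.add_mod_mod]
    have h : i0 + (n + j0 - i0) = n + j0 := by omega
    rw [h, Nat.add_mod_left, hj0m]
  have hd1lt : d1 < n := Nat.mod_lt _ npos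
  by_cases hfree : ∀ m, 0 < m → m < d1 → C.vert ((i0 + m) % n) ≠ w
  · have h := forward d1 i0 (by rwa [hi0m]) hfree (by rwa [hkey])
    rwa [hi0m, hkey] at h
  · push_neg at hfree
    obtain ⟨m0, hm0p, hm0lt, hm0w⟩ := hfree
    set d2 := n - d1 with hd2
    have hkey2 : (j0 + d2) % n = i0 := by
      have h1 : (j0 + d2) % n = (i0 + d1 + d2) % n := by rw [← hkey, Nat.mod_add_mod]
      have h2 : i0 + d1 + d2 = i0 + n := by omega
      rw [h1, h2, Nat.add_mod_right, hi0m]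
    have hfree2 : ∀ m, 0 < m → m < d2 → C.vert ((j0 + m) % n) ≠ w := by
      intro m hmp hmlt heq
      have hinj := hC.2 _ (Nat.mod_lt (i0 + m0) npos) _ (Nat.mod_lt (j0 + m) npos)
        (hm0w.trans heq.symm)
      have h1 : (j0 + m) % n = (i0 + (d1 + m)) % n := by
        rw [← hkey, Nat.mod_add_mod, Nat.add_assoc]
      rw [h1] at hinj
      have h2 : m0 % n = (d1 + m) % n := Nat.ModEq.add_left_cancel' i0 hinj
      rw [Nat.mod_eq_of_lt (hm0lt.trans hd1lt), Nat.mod_eq_of_lt (by omega)] at h2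
      omega
    have h := forward d2 j0 (by rwa [hj0m]) hfree2 (by rw [hkey2]; exact hxw)
    rw [hj0m, hkey2] at h
    exact G.reach_symm _ _ h

lemma delete_comp_reach (G : Multigraph) (hG : G.VertexConn 3)
    (C : ClosedWalk G) (hC : C.IsSimpleCycle) (A B : Set G.V)
    (hAB : A ∪ B = (C.vertexSet)ᶜ)
    (hsep : ∀ (e : G.E), ∀ a ∈ A, ∀ b ∈ B, G.ends e ≠ s(a, b))
    (H : Set G.V) (hH : G.IsCompOf A H) (w : G.V)
    {u v : G.V} (hu : u ∉ H) (huw : u ≠ w) (hv : v ∉ H) (hvw : v ≠ w) :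
    G.Reach (H ∪ {w})ᶜ Set.univ u v := by
  obtain ⟨u0, hu0A, hHdef⟩ := id hH
  have hHA : H ⊆ A := by rw [hHdef]; exact fun z hz => hz.1
  have hHC : ∀ z ∈ H, z ∉ C.vertexSet := by
    intro z hz hzc
    have h1 : z ∈ A ∪ B := Set.mem_union_left B (hHA hz)
    rw [hAB] at h1
    exact h1 hzc
  have nbr : ∀ (e : G.E) (x z : G.V), z ∈ H → x ∉ H → G.ends e = s(z, x) →
      x ∈ C.vertexSet := by
    intro e x z hz hx he
    rw [hHdef] at hz hx
    by_contra hxc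
    have hxAB : x ∈ A ∪ B := by rw [hAB]; exact hxc
    rcases hxAB with hxA | hxB
    · exact hx ⟨hxA, hz.2.tail ⟨hz.1, hxA, e, trivial, he⟩⟩
    · exact hsep e z hz.1 x hxB he
  have hcyc : ∀ x ∈ C.vertexSet, ∀ y ∈ C.vertexSet, x ≠ w → y ≠ w →
      G.Reach (H ∪ {w})ᶜ Set.univ x y := by
    refine G.cycle_reach C hC _ w ?_
    intro z hz hzw
    simp only [Set.mem_compl_iff, Set.mem_union, Set.mem_singleton_iff]
    push_neg
    exact ⟨fun h => hHC z h hz, hzw⟩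
  have hwalk : G.Reach ({w} : Set G.V)ᶜ Set.univ u v := by
    have h := hG {w} (by simp) u (by simpa using huw) v (by simpa using hvw)
    simpa using h
  have main : ∀ x : G.V, G.Reach ({w} : Set G.V)ᶜ Set.univ x v →
      (x ∉ H → G.Reach (H ∪ {w})ᶜ Set.univ x v) ∧
      (x ∈ H → ∃ c ∈ C.vertexSet, c ≠ w ∧ G.Reach (H ∪ {w})ᶜ Set.univ c v) := by
    intro x hx
    induction hx using Relation.ReflTransGen.head_induction_on with
    | refl => exact ⟨fun _ => Relation.ReflTransGen.refl, fun hvH => absurd hvH hv⟩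
    | @head a b hab hbv ih =>
      obtain ⟨haw, hbw, e, -, he⟩ := hab
      have haw' : a ≠ w := by simpa using haw
      have hbw' : b ≠ w := by simpa using hbw
      have hmemab : ∀ z : G.V, z ∉ H → z ≠ w → z ∈ ((H ∪ {w}) : Set G.V)ᶜ := by
        intro z h1 h2
        simp only [Set.mem_compl_iff, Set.mem_union, Set.mem_singleton_iff]
        push_neg
        exact ⟨h1, h2⟩
      constructor
      · intro haH
        by_cases hbH : b ∈ H
        · have haC : a ∈ C.vertexSet := nbr e a b hbH haH (by rw [he, Sym2.eq_swap])
          obtain ⟨c, hcC, hcw, hcr⟩ := ih.2 hbH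
          exact (hcyc a haC c hcC haw' hcw).trans hcr
        · exact Relation.ReflTransGen.head
            ⟨hmemab a haH haw', hmemab b hbH hbw', e, trivial, he⟩ (ih.1 hbH)
      · intro haH
        by_cases hbH : b ∈ H
        · exact ih.2 hbH
        · have hbC : b ∈ C.vertexSet := nbr e b a haH hbH he
          exact ⟨b, hbC, hbw', ih.1 hbH⟩
  exact (main u hwalk).1 hu

end Multigraph

end AuxProofs

/-- If `G` is triconnected, `C` is a simple cycle whose
vertex set separates `G ∖ C` into parts `A` and `B`, and `H` is a connected
component of `A`, then `G/H` is triconnected. -/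
theorem contract_component_triconnected (G : Multigraph) (hG : G.VertexConn 3)
    (C : ClosedWalk G) (hC : C.IsSimpleCycle) (A B : Set G.V)
    (hAB : A ∪ B = (C.vertexSet)ᶜ) (hdisj : Disjoint A B)
    (hsep : ∀ (e : G.E), ∀ a ∈ A, ∀ b ∈ B, G.ends e ≠ s(a, b))
    (H : Set G.V) (hH : G.IsCompOf A H) :
    (G.contractSet H).VertexConn 3 := by
  intro W' hW'card u' hu' v' hv'
  obtain ⟨u, rfl⟩ := Quotient.exists_rep u'
  obtain ⟨v, rfl⟩ := Quotient.exists_rep v'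
  replace hu' : ¬ ((Quotient.mk (G.contractSetoid H) u : (G.contractSet H).V) ∈ W') := hu'
  replace hv' : ¬ ((Quotient.mk (G.contractSetoid H) v : (G.contractSet H).V) ∈ W') := hv'
  obtain ⟨u0, hu0A, hHdef⟩ := id hH
  have hu0H : u0 ∈ H := by rw [hHdef]; exact ⟨hu0A, Relation.ReflTransGen.refl⟩
  have hmk : ∀ z ∈ H, Quotient.mk (G.contractSetoid H) z =
      Quotient.mk (G.contractSetoid H) u0 :=
    fun z hz => Quotient.sound (Or.inr ⟨hz, hu0H⟩)
  have hexact : ∀ z z' : G.V,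
      Quotient.mk (G.contractSetoid H) z = Quotient.mk (G.contractSetoid H) z' →
      z = z' ∨ (z ∈ H ∧ z' ∈ H) := fun z z' h => Quotient.exact h
  by_cases hcase : Quotient.mk (G.contractSetoid H) u0 ∈ W'
  · -- the contracted vertex is deleted; at most one other vertex is deleted
    haveI : DecidableEq (Quotient (G.contractSetoid H)) := Classical.decEq _
    by_cases hex : ∃ c ∈ W',
        c ≠ (Quotient.mk (G.contractSetoid H) u0 : (G.contractSet H).V)
    · obtain ⟨c, hcW, hcne⟩ := hex
      have honly : ∀ c' ∈ W',
          c' = (Quotient.mk (G.contractSetoid H) u0 : (G.contractSet H).V) ∨ c' = c := by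
        intro c' hc'
        by_cases h : c' = (Quotient.mk (G.contractSetoid H) u0 : (G.contractSet H).V)
        · exact Or.inl h
        · refine Or.inr ?_
          have hle : (W'.erase ((Quotient.mk (G.contractSetoid H) u0 : (G.contractSet H).V))).card ≤ 1 := by
            exact (@Finset.card_erase_of_mem _ _ _ (G.contractSet H).decEqV hcase).le.trans (by omega : W'.card - 1 ≤ 1)
          exact Finset.card_le_one.mp hle c' (Finset.mem_erase.mpr ⟨h, hc'⟩)
            c (Finset.mem_erase.mpr ⟨hcne, hcW⟩)
      set w := c.out with hw
      have hwc : Quotient.mk (G.contractSetoid H) w = c := Quotient.out_eq c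
      have hmap : ∀ z ∈ ((H ∪ {w}) : Set G.V)ᶜ,
          Quotient.mk (G.contractSetoid H) z ∈ (↑W' : Set (G.contractSet H).V)ᶜ := by
        intro z hz hzW
        simp only [Set.mem_compl_iff, Set.mem_union, Set.mem_singleton_iff] at hz
        push_neg at hz
        rcases honly _ hzW with h | h
        · rcases hexact _ _ h with rfl | ⟨h1, _⟩
          · exact hz.1 hu0H
          · exact hz.1 h1
        · rcases hexact _ _ (h.trans hwc.symm) with rfl | ⟨h1, _⟩
          · exact hz.2 rfl
          · exact hz.1 h1
      have huH : u ∉ H := fun h => hu' (by rw [hmk u h]; exact hcase)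
      have huw : u ≠ w := fun h => hu' (by rw [h, hwc]; exact hcW)
      have hvH : v ∉ H := fun h => hv' (by rw [hmk v h]; exact hcase)
      have hvw : v ≠ w := fun h => hv' (by rw [h, hwc]; exact hcW)
      exact G.reach_contract H _ _ hmap
        (G.delete_comp_reach hG C hC A B hAB hsep H hH w huH huw hvH hvw)
    · have hex' : ∀ c ∈ W', c = (Quotient.mk (G.contractSetoid H) u0 : (G.contractSet H).V) := by
        intro c hc
        by_contra hne
        exact hex ⟨c, hc, hne⟩
      set w := u0 with hw
      have hmap : ∀ z ∈ ((H ∪ {w}) : Set G.V)ᶜ,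
          Quotient.mk (G.contractSetoid H) z ∈ (↑W' : Set (G.contractSet H).V)ᶜ := by
        intro z hz hzW
        simp only [Set.mem_compl_iff, Set.mem_union, Set.mem_singleton_iff] at hz
        push_neg at hz
        rcases hexact _ _ (hex' _ hzW) with rfl | ⟨h1, _⟩
        · exact hz.2 rfl
        · exact hz.1 h1
      have huH : u ∉ H := fun h => hu' (by rw [hmk u h]; exact hcase)
      have huw : u ≠ w := fun h => huH (h ▸ hu0H)
      have hvH : v ∉ H := fun h => hv' (by rw [hmk v h]; exact hcase)
      have hvw : v ≠ w := fun h => hvH (h ▸ hu0H)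
      exact G.reach_contract H _ _ hmap
        (G.delete_comp_reach hG C hC A B hAB hsep H hH w huH huw hvH hvw)
  · -- the contracted vertex survives: lift the deleted vertices to G
    set WG : Finset G.V := W'.image Quotient.out with hWG
    have hcard : WG.card < 3 := lt_of_le_of_lt Finset.card_image_le hW'card
    have houtmem : ∀ z : G.V, Quotient.mk (G.contractSetoid H) z ∈ W' →
        z ∈ WG ∨ z ∈ H := by
      intro z hz
      have hout : Quotient.mk (G.contractSetoid H)
          ((Quotient.mk (G.contractSetoid H) z).out) =
          Quotient.mk (G.contractSetoid H) z := Quotient.out_eq _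
      rcases hexact _ _ hout with heq | ⟨_, h2⟩
      · left; rw [← heq]; exact Finset.mem_image_of_mem _ hz
      · right; exact h2
    have hmap : ∀ z ∈ (↑WG : Set G.V)ᶜ,
        Quotient.mk (G.contractSetoid H) z ∈ (↑W' : Set (G.contractSet H).V)ᶜ := by
      intro z hz hzW
      by_cases hzH : z ∈ H
      · exact hcase (hmk z hzH ▸ hzW)
      · rcases houtmem z hzW with h | h
        · exact hz h
        · exact hzH h
    have hune : u ∉ WG := by
      intro hu
      obtain ⟨cc, hcW, hcu⟩ := Finset.mem_image.mp hu
      exact hu' (by rw [← hcu, Quotient.out_eq]; exact hcW)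
    have hvne : v ∉ WG := by
      intro hv
      obtain ⟨cc, hcW, hcv⟩ := Finset.mem_image.mp hv
      exact hv' (by rw [← hcv, Quotient.out_eq]; exact hcW)
    exact G.reach_contract H _ _ hmap (hG WG hcard u hune v hvne)
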